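/- Let B be a finitely generated free abelian group, let F ⊆ B be a finite subset, let σ ⊆ B ⊗ ℝ be the convex cone consisting of all nonnegative real linear combinations of the images of elements of F, let B_G ⊆ B be a subgroup, and let σ_G = σ ∩ (B_G ⊗ ℝ), the intersection of σ with the real span of B_G inside B ⊗ ℝ. Assume that the only group homomorphism s : B → ℤ whose ℝ-linear extension to B ⊗ ℝ is nonnegative at every point of σ and zero at every point of σ_G is the zero homomorphism. Then there exists f ∈ B_G whose image in B ⊗ ℝ lies in the topological interior of σ. -/

import Mathlib

open scoped BigOperators

set_option linter.unusedSectionVars false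
open Matrix Finset

namespace ConeAux

variable {K : Type*} [Field K] [LinearOrder K] [IsStrictOrderedRing K] {ι : Type*} [Fintype ι]




/-- `b` is a nonnegative combination of the vectors in `l`. -/
def NN : List (ι → K) → (ι → K) → Prop
  | [], b => b = 0
  | a :: l, b => ∃ t : K, 0 ≤ t ∧ NN l (b - t • a)

/-- `b` is a strictly positive combination of the vectors in `l`. -/
def NNP : List (ι → K) → (ι → K) → Prop
  | [], b => b = 0
  | a :: l, b => ∃ t : K, 0 < t ∧ NNP l (b - t • a)

lemma nn_dot_nonneg {y : ι → K} : ∀ {l : List (ι → K)} {b : ι → K}, NN l b →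
    (∀ a ∈ l, 0 ≤ y ⬝ᵥ a) → 0 ≤ y ⬝ᵥ b
  | [], b, hb, _ => by
    have hb' : b = 0 := hb
    simp [hb']
  | a :: l, b, hb, hy => by
    obtain ⟨t, ht, h⟩ := hb
    have h1 := nn_dot_nonneg h (fun a ha => hy a (List.mem_cons_of_mem _ ha))
    have h2 := hy a (List.mem_cons_self)
    rw [dotProduct_sub, dotProduct_smul, smul_eq_mul] at h1
    nlinarith

lemma nn_unproj (a : ι → K) (κ : (ι → K) →ₗ[K] K) (hκ : κ a = 1) :
    ∀ (l : List (ι → K)) (w : ι → K),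
      NN (l.map (fun v => v - κ v • a)) (w - κ w • a) → ∃ μ : K, NN l (w + μ • a)
  | [], w, h => by
    refine ⟨-κ w, ?_⟩
    have h' : w - κ w • a = 0 := h
    show w + -κ w • a = 0
    rw [← h']; rw [neg_smul]; abel
  | a' :: l, w, h => by
    obtain ⟨t, ht, h⟩ := h
    have key : w - κ w • a - t • (a' - κ a' • a)
        = (w - t • a') - κ (w - t • a') • a := by
      simp only [LinearMap.map_sub, LinearMap.map_smul, smul_eq_mul, sub_smul, smul_sub,
        mul_smul]
      abel
    rw [key] at h
    obtain ⟨μ, hμ⟩ := nn_unproj a κ hκ l (w - t • a') h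
    refine ⟨μ, t, ht, ?_⟩
    have : w - t • a' + μ • a = w + μ • a - t • a' := by abel
    rwa [this] at hμ

theorem farkas : ∀ (l : List (ι → K)) (b : ι → K),
    NN l b ∨ ∃ y : ι → K, (∀ a ∈ l, 0 ≤ y ⬝ᵥ a) ∧ y ⬝ᵥ b < 0
  | [], b => by
    by_cases hb : b = 0
    · exact Or.inl hb
    · refine Or.inr ⟨-b, by simp, ?_⟩
      have : 0 < b ⬝ᵥ b := lt_of_le_of_ne (Finset.sum_nonneg fun i _ => mul_self_nonneg _)
        (Ne.symm (fun h => hb (dotProduct_self_eq_zero.mp h)))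
      rw [neg_dotProduct]; linarith
  | a :: l, b => by
    rcases farkas l b with h | ⟨y, hy, hyb⟩
    · exact Or.inl ⟨0, le_refl 0, by simpa using h⟩
    by_cases hya : 0 ≤ y ⬝ᵥ a
    · exact Or.inr ⟨y, fun a' ha' => by
        rcases List.mem_cons.mp ha' with rfl | h'
        exacts [hya, hy a' h'], hyb⟩
    push_neg at hya
    set κ : (ι → K) →ₗ[K] K :=
      { toFun := fun v => (y ⬝ᵥ v) / (y ⬝ᵥ a)
        map_add' := fun u v => by simp [dotProduct_add, add_div]
        map_smul' := fun c v => by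
          simp [dotProduct_smul, smul_eq_mul, mul_div_assoc] } with hκdef
    have hκ : κ a = 1 := div_self (ne_of_lt hya)
    have hκap : ∀ v, κ v = (y ⬝ᵥ v) / (y ⬝ᵥ a) := fun v => rfl
    rcases farkas (l.map (fun v => v - κ v • a)) (b - κ b • a) with h | ⟨y', hy', hy'b⟩
    · obtain ⟨μ, hμ⟩ := nn_unproj a κ hκ l b h
      have hnn : 0 ≤ y ⬝ᵥ (b + μ • a) := nn_dot_nonneg hμ hy
      rw [dotProduct_add, dotProduct_smul, smul_eq_mul] at hnn
      have hμneg : 0 ≤ -μ := by nlinarith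
      refine Or.inl ⟨-μ, hμneg, ?_⟩
      have : b - -μ • a = b + μ • a := by
        rw [neg_smul]; abel
      rwa [this]
    · refine Or.inr ⟨y' - ((y' ⬝ᵥ a) / (y ⬝ᵥ a)) • y, fun a' ha' => ?_, ?_⟩
      · have key : ∀ v, (y' - ((y' ⬝ᵥ a) / (y ⬝ᵥ a)) • y) ⬝ᵥ v = y' ⬝ᵥ (v - κ v • a) := by
          intro v
          rw [sub_dotProduct, smul_dotProduct, dotProduct_sub, dotProduct_smul,
            hκap, smul_eq_mul, smul_eq_mul]
          field_simp
        rcases List.mem_cons.mp ha' with rfl | h'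
        · rw [key, hκ, one_smul, sub_self, dotProduct_zero]
        · rw [key]; exact hy' _ (List.mem_map_of_mem h')
      · have key : (y' - ((y' ⬝ᵥ a) / (y ⬝ᵥ a)) • y) ⬝ᵥ b = y' ⬝ᵥ (b - κ b • a) := by
          rw [sub_dotProduct, smul_dotProduct, dotProduct_sub, dotProduct_smul,
            hκap, smul_eq_mul, smul_eq_mul]
          field_simp
        rw [key]; exact hy'b
termination_by l => l.length
decreasing_by all_goals simp [List.length_map]; try omega


omit [Fintype ι] in
lemma nn_add_nnp : ∀ {l : List (ι → K)} {b₁ b₂ : ι → K},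
    NN l b₁ → NNP l b₂ → NNP l (b₁ + b₂)
  | [], b₁, b₂, h₁, h₂ => by
    have e₁ : b₁ = 0 := h₁; have e₂ : b₂ = 0 := h₂
    show b₁ + b₂ = 0
    rw [e₁, e₂, add_zero]
  | a :: l, b₁, b₂, h₁, h₂ => by
    obtain ⟨t₁, ht₁, h₁⟩ := h₁
    obtain ⟨t₂, ht₂, h₂⟩ := h₂
    refine ⟨t₁ + t₂, by linarith, ?_⟩
    have : b₁ + b₂ - (t₁ + t₂) • a = (b₁ - t₁ • a) + (b₂ - t₂ • a) := by
      rw [add_smul]; abel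
    rw [this]
    exact nn_add_nnp h₁ h₂

omit [Fintype ι] in
lemma nnp_sum : ∀ (l : List (ι → K)), NNP l l.sum
  | [] => rfl
  | a :: l => by
    refine ⟨1, one_pos, ?_⟩
    have : (a :: l).sum - (1 : K) • a = l.sum := by
      rw [List.sum_cons, one_smul]; abel
    rw [this]
    exact nnp_sum l

omit [Fintype ι] in
lemma nnp_zero_of_nn_neg {L : List (ι → K)} (h : ∀ a ∈ L, NN L (-a)) : NNP L 0 := by
  have aux : ∀ m : List (ι → K), (∀ a ∈ m, NN L (-a)) → NNP L (L.sum - m.sum) := by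
    intro m
    induction m with
    | nil => intro _; simpa using nnp_sum L
    | cons a m ih =>
      intro hm
      have h1 : NNP L (L.sum - m.sum) := ih fun a' ha' => hm a' (List.mem_cons_of_mem _ ha')
      have h2 : NN L (-a) := hm a (List.mem_cons_self)
      have : L.sum - (a :: m).sum = -a + (L.sum - m.sum) := by
        rw [List.sum_cons]; abel
      rw [this]
      exact nn_add_nnp h2 h1
  have := aux L (fun a ha => h a ha)
  simpa using this

/-- Stiemke's lemma. -/
theorem stiemke (L : List (ι → K))
    (h : ∀ y : ι → K, (∀ a ∈ L, 0 ≤ y ⬝ᵥ a) → ∀ a ∈ L, y ⬝ᵥ a ≤ 0) : NNP L 0 := by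
  apply nnp_zero_of_nn_neg
  intro a ha
  rcases farkas L (-a) with h' | ⟨y, hy, hyb⟩
  · exact h'
  · exfalso
    rw [dotProduct_neg, neg_neg_iff_pos] at hyb
    exact absurd (h y hy a ha) (not_le.mpr hyb)

omit [Fintype ι] in
lemma nnp_append : ∀ {l₁ l₂ : List (ι → K)} {w : ι → K}, NNP (l₁ ++ l₂) w →
    ∃ u v : ι → K, NNP l₁ u ∧ NNP l₂ v ∧ w = u + v
  | [], l₂, w, h => ⟨0, w, rfl, by simpa using h, by rw [zero_add]⟩
  | a :: l₁, l₂, w, h => by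
    obtain ⟨t, ht, h⟩ := h
    obtain ⟨u, v, hu, hv, huv⟩ := nnp_append h
    refine ⟨u + t • a, v, ⟨t, ht, by simpa using hu⟩, hv, ?_⟩
    have : w - t • a = u + v := huv
    have := congrArg (· + t • a) this
    simpa [sub_add_cancel, add_right_comm] using this

omit [Fintype ι] in
lemma nnp_mem_span : ∀ {l : List (ι → K)} {w : ι → K}, NNP l w →
    w ∈ Submodule.span K {a : ι → K | a ∈ l}
  | [], w, h => by
    have : w = 0 := h
    simp [this]
  | a :: l, w, h => by
    obtain ⟨t, ht, h⟩ := h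
    have h1 : w - t • a ∈ Submodule.span K {a : ι → K | a ∈ l} := nnp_mem_span h
    have h2 : Submodule.span K {x : ι → K | x ∈ l} ≤ Submodule.span K {x : ι → K | x ∈ a :: l} :=
      Submodule.span_mono (fun x hx => List.mem_cons_of_mem _ hx)
    have h3 : a ∈ Submodule.span K {x : ι → K | x ∈ a :: l} :=
      Submodule.subset_span (List.mem_cons_self)
    have : w = (w - t • a) + t • a := by abel
    rw [this]
    exact Submodule.add_mem _ (h2 h1) (Submodule.smul_mem _ _ h3)

lemma nnp_finset : ∀ {l : List (ι → K)}, l.Nodup → ∀ {w : ι → K}, NNP l w →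
    ∃ c : (ι → K) → K, (∀ a ∈ l, 0 < c a) ∧ w = ∑ a ∈ l.toFinset, c a • a
  | [], _, w, h => ⟨fun _ => 1, by simp, by have h' : w = 0 := h; simpa using h'⟩
  | a :: l, hnd, w, h => by
    obtain ⟨t, ht, h⟩ := h
    have hal : a ∉ l := (List.nodup_cons.mp hnd).1
    obtain ⟨c, hc, hsum⟩ := nnp_finset (List.nodup_cons.mp hnd).2 h
    refine ⟨Function.update c a t, ?_, ?_⟩
    · intro a' ha'
      rcases List.mem_cons.mp ha' with rfl | h'
      · rw [Function.update_self]; exact ht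
      · rw [Function.update_of_ne (by rintro rfl; exact hal h')]
        exact hc a' h'
    · rw [List.toFinset_cons, Finset.sum_insert (by simpa using hal),
        Function.update_self]
      have : ∑ x ∈ l.toFinset, Function.update c a t x • x = ∑ x ∈ l.toFinset, c x • x := by
        apply Finset.sum_congr rfl
        intro x hx
        rw [Function.update_of_ne (by rintro rfl; exact hal (List.mem_toFinset.mp hx))]
      rw [this, ← hsum]
      abel




lemma exists_int_scale {n : ℕ} (y : Fin n → ℚ) :
    ∃ (M : ℕ) (z : Fin n → ℤ), 0 < M ∧ ∀ i, (M : ℚ) * y i = (z i : ℚ) := by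
  refine ⟨∏ j, (y j).den, fun i => (y i).num * ∏ j ∈ Finset.univ.erase i, ((y j).den : ℤ),
    Finset.prod_pos (fun j _ => (y j).pos), fun i => ?_⟩
  have h1 : (∏ j, ((y j).den : ℚ)) = ((y i).den : ℚ) * ∏ j ∈ univ.erase i, ((y j).den : ℚ) :=
    (Finset.mul_prod_erase univ _ (mem_univ i)).symm
  push_cast
  rw [h1]
  linear_combination (∏ j ∈ univ.erase i, ((y j).den : ℚ)) * Rat.mul_den_eq_num (y i)

def qcast {n : ℕ} (b : Fin n → ℤ) : Fin n → ℚ := fun i => (b i : ℚ)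

lemma clear_denom {n : ℕ} (BG : AddSubgroup (Fin n → ℤ)) (x : Fin n → ℚ)
    (hx : x ∈ Submodule.span ℚ (qcast '' (BG : Set (Fin n → ℤ)))) :
    ∃ (N : ℕ) (g : Fin n → ℤ), 0 < N ∧ g ∈ BG ∧ (N : ℚ) • x = qcast g := by
  set D : Submodule ℚ (Fin n → ℚ) :=
    { carrier := {x | ∃ (N : ℕ) (g : Fin n → ℤ), 0 < N ∧ g ∈ BG ∧ (N : ℚ) • x = qcast g}
      zero_mem' := ⟨1, 0, one_pos, BG.zero_mem, by funext i; simp [qcast]⟩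
      add_mem' := by
        rintro x y ⟨N₁, g₁, hN₁, hg₁, h₁⟩ ⟨N₂, g₂, hN₂, hg₂, h₂⟩
        refine ⟨N₁ * N₂, N₂ • g₁ + N₁ • g₂, Nat.mul_pos hN₁ hN₂,
          BG.add_mem (BG.nsmul_mem hg₁ N₂) (BG.nsmul_mem hg₂ N₁), ?_⟩
        funext i
        have e₁ := congrFun h₁ i
        have e₂ := congrFun h₂ i
        simp only [Pi.smul_apply, smul_eq_mul, qcast, Pi.add_apply, nsmul_eq_mul, Pi.mul_apply, Pi.natCast_apply] at e₁ e₂ ⊢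
        push_cast
        linear_combination (N₂ : ℚ) * e₁ + (N₁ : ℚ) * e₂
      smul_mem' := by
        rintro q x ⟨N, g, hN, hg, h⟩
        refine ⟨q.den * N, q.num • g, Nat.mul_pos q.pos hN, BG.zsmul_mem hg q.num, ?_⟩
        funext i
        have e := congrFun h i
        simp only [Pi.smul_apply, smul_eq_mul, qcast, zsmul_eq_mul, Pi.mul_apply, Pi.intCast_apply] at e ⊢
        push_cast
        have hd := Rat.mul_den_eq_num q
        linear_combination (q.num : ℚ) * e + (N : ℚ) * x i * hd }
  have hle : Submodule.span ℚ (qcast '' (BG : Set (Fin n → ℤ))) ≤ D := by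
    rw [Submodule.span_le]
    rintro _ ⟨g, hg, rfl⟩
    exact ⟨1, g, one_pos, hg, by funext i; simp [qcast]⟩
  exact hle hx




/-- Integer dot-product functional as a real linear map. -/
def dotR {n : ℕ} (z : Fin n → ℤ) : (Fin n → ℝ) →ₗ[ℝ] ℝ where
  toFun := fun x => ∑ i, (z i : ℝ) * x i
  map_add' := fun u v => by
    simp [Pi.add_apply, mul_add, Finset.sum_add_distrib]
  map_smul' := fun c v => by
    simp only [Pi.smul_apply, smul_eq_mul, RingHom.id_apply, Finset.mul_sum]
    exact Finset.sum_congr rfl fun i _ => by ring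

@[simp] lemma dotR_apply {n : ℕ} (z : Fin n → ℤ) (x : Fin n → ℝ) :
    dotR z x = ∑ i, (z i : ℝ) * x i := rfl

/-- Integer dot-product functional as an additive hom on `ℤⁿ`. -/
def dotZ {n : ℕ} (z : Fin n → ℤ) : (Fin n → ℤ) →+ ℤ :=
  AddMonoidHom.mk' (fun b => ∑ i, z i * b i) (fun b₁ b₂ => by
    simp [Pi.add_apply, mul_add, Finset.sum_add_distrib])

@[simp] lemma dotZ_apply {n : ℕ} (z b : Fin n → ℤ) : dotZ z b = ∑ i, z i * b i := rfl

lemma dotR_rcast {n : ℕ} (z b : Fin n → ℤ) :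
    dotR z (fun i => (b i : ℝ)) = ((∑ i, z i * b i : ℤ) : ℝ) := by
  rw [dotR_apply]
  push_cast
  rfl


def dotLin (y : ι → K) : (ι → K) →ₗ[K] K where
  toFun := fun v => y ⬝ᵥ v
  map_add' := fun u v => dotProduct_add y u v
  map_smul' := fun c v => dotProduct_smul c y v

@[simp] lemma dotLin_apply (y v : ι → K) : dotLin y v = y ⬝ᵥ v := rfl

lemma qcast_injective {n : ℕ} : Function.Injective (qcast (n := n)) :=
  fun a b h => funext fun i => Int.cast_injective (congrFun h i)

lemma cast_dot_eq {n : ℕ} {y : Fin n → ℚ} {M : ℕ} {z : Fin n → ℤ}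
    (hz : ∀ i, (M : ℚ) * y i = (z i : ℚ)) (b : Fin n → ℤ) :
    ((∑ i, z i * b i : ℤ) : ℚ) = (M : ℚ) * (y ⬝ᵥ qcast b) := by
  push_cast
  simp only [dotProduct, qcast, Finset.mul_sum]
  refine Finset.sum_congr rfl fun i _ => ?_
  rw [← hz i]
  ring

end ConeAux


open Matrix Finset ConeAux in
/-- Let `B = ℤⁿ` be a finitely generated free abelian group, `F ⊆ B` a finite subset,
`σ ⊆ B ⊗ ℝ = ℝⁿ` the convex cone of all nonnegative real linear combinations of the
images of elements of `F`, `B_G ⊆ B` a subgroup and `σ_G = σ ∩ (B_G ⊗ ℝ)` the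
intersection of `σ` with the real span of `B_G`.  If the only group homomorphism
`s : B → ℤ` whose `ℝ`-linear extension is nonnegative on `σ` and vanishes on `σ_G`
is the zero homomorphism, then `B_G` contains an element whose image lies in the
topological interior of `σ`. -/
theorem exists_interior_point_of_continuity
    (n : ℕ) (F : Finset (Fin n → ℤ)) (BG : AddSubgroup (Fin n → ℤ))
    (σ : Set (Fin n → ℝ))
    (hσ : σ = {x | ∃ c : (Fin n → ℤ) → ℝ, (∀ b, 0 ≤ c b) ∧
        x = ∑ b ∈ F, c b • (fun i => ((b i : ℝ)))})
    (σG : Set (Fin n → ℝ))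
    (hσG : σG = σ ∩
      (Submodule.span ℝ ((fun b : Fin n → ℤ => fun i => ((b i : ℝ))) '' BG) : Set (Fin n → ℝ)))
    (hdual : ∀ (s : (Fin n → ℤ) →+ ℤ) (S : (Fin n → ℝ) →ₗ[ℝ] ℝ),
        (∀ b : Fin n → ℤ, S (fun i => (b i : ℝ)) = (s b : ℝ)) →
        (∀ x ∈ σ, 0 ≤ S x) → (∀ x ∈ σG, S x = 0) → s = 0) :
    ∃ f ∈ BG, (fun i => ((f i : ℝ))) ∈ interior σ := by
  classical
  -- `Sval`: value of an integer functional on a point of σ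
  have Sval : ∀ (z : Fin n → ℤ) (x : Fin n → ℝ), x ∈ σ →
      ∃ c : (Fin n → ℤ) → ℝ, (∀ b, 0 ≤ c b) ∧
        dotR z x = ∑ b ∈ F, c b * ((∑ i, z i * b i : ℤ) : ℝ) := by
    intro z x hx
    rw [hσ] at hx
    obtain ⟨c, hc, rfl⟩ := hx
    refine ⟨c, hc, ?_⟩
    rw [map_sum]
    refine Finset.sum_congr rfl fun b _ => ?_
    rw [LinearMap.map_smul, smul_eq_mul, dotR_rcast]
  -- `key`: the main consequence of `hdual`
  have key : ∀ z : Fin n → ℤ, (∀ b ∈ F, 0 ≤ ∑ i, z i * b i) →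
      (∀ x ∈ σG, dotR z x = 0) → ∀ b : Fin n → ℤ, (∑ i, z i * b i) = 0 := by
    intro z h1 h2 b
    have hpos : ∀ x ∈ σ, 0 ≤ dotR z x := by
      intro x hx
      obtain ⟨c, hc, hval⟩ := Sval z x hx
      rw [hval]
      refine Finset.sum_nonneg fun b hb => mul_nonneg (hc b) ?_
      exact_mod_cast h1 b hb
    have hz := hdual (dotZ z) (dotR z) (fun b => by rw [dotR_rcast, dotZ_apply]) hpos h2
    have := DFunLike.congr_fun hz b
    simpa using this
  -- σG ⊆ σ
  have hσGsub : σG ⊆ σ := by rw [hσG]; exact Set.inter_subset_left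
  -- Step A: the rational span of F is everything
  have hspanQ : Submodule.span ℚ (qcast '' (F : Set (Fin n → ℤ))) = ⊤ := by
    by_contra hne
    obtain ⟨x, hx⟩ : ∃ x, x ∉ Submodule.span ℚ (qcast '' (F : Set (Fin n → ℤ))) := by
      by_contra h
      push_neg at h
      exact hne (Submodule.eq_top_iff'.mpr h)
    set W := Submodule.span ℚ (qcast '' (F : Set (Fin n → ℤ))) with hW
    have hx0 : (Submodule.Quotient.mk x : (Fin n → ℚ) ⧸ W) ≠ 0 := by
      simp only [ne_eq, Submodule.Quotient.mk_eq_zero]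
      exact hx
    obtain ⟨φ, hφ⟩ : ∃ φ : Module.Dual ℚ ((Fin n → ℚ) ⧸ W),
        φ (Submodule.Quotient.mk x) ≠ 0 := by
      by_contra h
      push_neg at h
      exact hx0 ((Module.forall_dual_apply_eq_zero_iff ℚ _).mp h)
    set y : Fin n → ℚ := fun i => φ (Submodule.Quotient.mk (Pi.single i 1)) with hy
    have hyw : ∀ w : Fin n → ℚ, y ⬝ᵥ w = φ (Submodule.Quotient.mk w) := by
      intro w
      have hrep : w = ∑ i, w i • (Pi.single i (1 : ℚ) : Fin n → ℚ) := by
        conv_lhs => rw [pi_eq_sum_univ w]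
        refine Finset.sum_congr rfl fun i _ => ?_
        congr 1
        funext j
        simp [Pi.single_apply, eq_comm]
      conv_rhs => rw [hrep, ← Submodule.mkQ_apply]
      rw [map_sum, map_sum]
      simp only [LinearMap.map_smul, smul_eq_mul, Submodule.mkQ_apply]
      rw [dotProduct]
      refine Finset.sum_congr rfl fun i _ => ?_
      rw [mul_comm]
    have hyF : ∀ b ∈ F, y ⬝ᵥ qcast b = 0 := by
      intro b hb
      rw [hyw]
      have hmem : qcast b ∈ W := Submodule.subset_span ⟨b, hb, rfl⟩
      rw [show (Submodule.Quotient.mk (qcast b) : (Fin n → ℚ) ⧸ W) = 0 from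
        (Submodule.Quotient.mk_eq_zero W).mpr hmem, map_zero]
    obtain ⟨M, z, hM, hz⟩ := exists_int_scale y
    have hcast : ∀ b : Fin n → ℤ, ((∑ i, z i * b i : ℤ) : ℚ) = (M : ℚ) * (y ⬝ᵥ qcast b) := by
      intro b
      push_cast
      simp only [dotProduct, qcast, Finset.mul_sum]
      refine Finset.sum_congr rfl fun i _ => ?_
      rw [← hz i]
      ring
    have hzF : ∀ b ∈ F, (∑ i, z i * b i : ℤ) = 0 := by
      intro b hb
      have : ((∑ i, z i * b i : ℤ) : ℚ) = 0 := by rw [hcast, hyF b hb, mul_zero]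
      exact_mod_cast this
    have hσ0 : ∀ x' ∈ σ, dotR z x' = 0 := by
      intro x' hx'
      obtain ⟨c, _, hval⟩ := Sval z x' hx'
      rw [hval]
      refine Finset.sum_eq_zero fun b hb => ?_
      rw [hzF b hb]
      simp
    have hall := key z (fun b hb => by rw [hzF b hb]) (fun x' hx' => hσ0 x' (hσGsub hx'))
    have hz0 : ∀ i, z i = 0 := by
      intro i
      have h1 := hall (Pi.single i 1)
      simpa [Pi.single_apply, mul_ite, Finset.sum_ite_eq] using h1
    have hy0 : y = 0 := by
      funext i
      have h1 := hz i
      have hM' : (M : ℚ) ≠ 0 := by exact_mod_cast hM.ne'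
      rw [hz0 i] at h1
      push_cast at h1
      rcases mul_eq_zero.mp h1 with h | h
      · exact absurd h hM'
      · simpa using h
    exact hφ (by rw [← hyw x, hy0, zero_dotProduct])
  -- Step B: the real span of F is everything
  have hspanR : Submodule.span ℝ ((fun b : Fin n → ℤ => fun i => ((b i : ℝ))) '' F) = ⊤ := by
    set J : (Fin n → ℚ) →ₗ[ℚ] (Fin n → ℝ) :=
      { toFun := fun v => fun i => ((v i : ℚ) : ℝ)
        map_add' := fun u v => by funext i; simp [Pi.add_apply]
        map_smul' := fun q v => by
          funext i
          simp only [Pi.smul_apply, smul_eq_mul, RingHom.id_apply, Rat.smul_def]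
          push_cast
          ring } with hJ
    have hJap : ∀ (v : Fin n → ℚ) (i : Fin n), J v i = ((v i : ℚ) : ℝ) := fun v i => rfl
    have hJtop : ∀ v : Fin n → ℚ,
        J v ∈ Submodule.span ℝ ((fun b : Fin n → ℤ => fun i => ((b i : ℝ))) '' F) := by
      intro v
      have hv : v ∈ Submodule.span ℚ (qcast '' (F : Set (Fin n → ℤ))) := by
        rw [hspanQ]; trivial
      have h2 : J v ∈ Submodule.span ℚ (J '' (qcast '' (F : Set (Fin n → ℤ)))) := by
        rw [← Submodule.map_span]
        exact ⟨v, hv, rfl⟩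
      have himg : J '' (qcast '' (F : Set (Fin n → ℤ)))
          = (fun b : Fin n → ℤ => fun i => ((b i : ℝ))) '' F := by
        rw [← Set.image_comp]
        refine Set.image_congr fun b _ => ?_
        funext i
        simp only [Function.comp_apply, hJap, qcast]
        push_cast
        rfl
      have h3 := Submodule.span_le_restrictScalars ℚ ℝ (J '' (qcast '' (F : Set (Fin n → ℤ))))
      have h4 := h3 h2
      rw [himg] at h4
      exact h4
    rw [eq_top_iff]
    intro x _
    rw [pi_eq_sum_univ x]
    refine Submodule.sum_mem _ fun i _ => Submodule.smul_mem _ _ ?_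
    have hsingle : (fun j => if i = j then (1 : ℝ) else 0) = J (Pi.single i 1) := by
      funext j
      rw [hJap]
      by_cases h : i = j <;> simp [Pi.single_apply, h]
    rw [hsingle]
    exact hJtop _
  -- Step C: the linear map from coefficients and its openness
  set T : ({b : Fin n → ℤ // b ∈ F} → ℝ) →ₗ[ℝ] (Fin n → ℝ) :=
    Fintype.linearCombination ℝ
      (fun b : {b : Fin n → ℤ // b ∈ F} => (fun i => ((b.1 i : ℝ)))) with hT
  have hTapp : ∀ cc : {b : Fin n → ℤ // b ∈ F} → ℝ,
      T cc = ∑ b : {b : Fin n → ℤ // b ∈ F}, cc b • (fun i => ((b.1 i : ℝ))) :=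
    fun cc => rfl
  have hTsurj : Function.Surjective T := by
    rw [← LinearMap.range_eq_top, eq_top_iff, ← hspanR, Submodule.span_le]
    rintro _ ⟨b, hb, rfl⟩
    refine LinearMap.mem_range.mpr ⟨Pi.single ⟨b, hb⟩ 1, ?_⟩
    rw [hT, Fintype.linearCombination_apply_single, one_smul]
  have hTopen : IsOpenMap T := by
    have h1 := (LinearMap.toContinuousLinearMap T).isOpenMap
      (by rw [LinearMap.coe_toContinuousLinearMap']; exact hTsurj)
    rwa [LinearMap.coe_toContinuousLinearMap'] at h1
  set P : Set ({b : Fin n → ℤ // b ∈ F} → ℝ) := {c | ∀ b, 0 < c b} with hP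
  have hPopen : IsOpen P := by
    have : P = Set.pi Set.univ (fun _ => Set.Ioi (0 : ℝ)) := by
      ext c
      simp [hP, Set.mem_pi]
    rw [this]
    exact isOpen_set_pi Set.finite_univ (fun _ _ => isOpen_Ioi)
  have hPsub : T '' P ⊆ σ := by
    rintro _ ⟨c, hc, rfl⟩
    rw [hσ]
    refine ⟨fun b => if h : b ∈ F then c ⟨b, h⟩ else 0, fun b => ?_, ?_⟩
    · by_cases h : b ∈ F
      · simp only [dif_pos h]; exact (hc ⟨b, h⟩).le
      · simp only [dif_neg h]; exact le_refl 0
    · rw [hTapp, ← Finset.sum_attach F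
        (fun b => (if h : b ∈ F then c ⟨b, h⟩ else 0) • (fun i => ((b i : ℝ)))),
        ← Finset.univ_eq_attach]
      refine Finset.sum_congr rfl fun b _ => ?_
      rw [dif_pos b.2]
  -- Step D: setting up the Stiemke data
  set U : Submodule ℚ (Fin n → ℚ) := Submodule.span ℚ (qcast '' (BG : Set (Fin n → ℤ))) with hU
  obtain ⟨Sfin, hSfin⟩ : U.FG := IsNoetherian.noetherian U
  have hch : ∀ v : Fin n → ℚ, ∃ (g : Fin n → ℤ) (N : ℕ), v ∈ U →
      g ∈ BG ∧ 0 < N ∧ (N : ℚ) • v = qcast g := by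
    intro v
    by_cases hv : v ∈ U
    · obtain ⟨N, g, hN, hg, he⟩ := clear_denom BG v hv
      exact ⟨g, N, fun _ => ⟨hg, hN, he⟩⟩
    · exact ⟨0, 1, fun h => absurd h hv⟩
  choose gf Nf hgf using hch
  set Fl : List (Fin n → ℚ) := F.toList.map qcast with hFl
  set Gl : List (Fin n → ℚ) := Sfin.toList.map (fun v => qcast (gf v)) with hGl
  set L : List (Fin n → ℚ) := Fl ++ (Gl ++ Gl.map Neg.neg) with hL
  have hSU : ∀ v ∈ Sfin, v ∈ U := fun v hv => hSfin ▸ Submodule.subset_span hv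
  have hyp : ∀ y : Fin n → ℚ, (∀ a ∈ L, 0 ≤ y ⬝ᵥ a) → ∀ a ∈ L, y ⬝ᵥ a ≤ 0 := by
    intro y hy
    have hGl0 : ∀ w ∈ Gl, y ⬝ᵥ w = 0 := by
      intro w hw
      have h1 : 0 ≤ y ⬝ᵥ w := hy w (by
        rw [hL]; exact List.mem_append_right _ (List.mem_append_left _ hw))
      have h2 : 0 ≤ y ⬝ᵥ (-w) := hy (-w) (by
        rw [hL]
        exact List.mem_append_right _ (List.mem_append_right _ (List.mem_map_of_mem hw)))
      rw [dotProduct_neg] at h2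
      linarith
    have hyU : ∀ v ∈ U, y ⬝ᵥ v = 0 := by
      have hker : U ≤ LinearMap.ker (dotLin y) := by
        rw [← hSfin, Submodule.span_le]
        intro v' hv'
        have hv'S : v' ∈ Sfin := hv'
        have hv'U : v' ∈ U := hSU v' hv'S
        obtain ⟨hgBG, hNpos, he⟩ := hgf v' hv'U
        have h0 : y ⬝ᵥ qcast (gf v') = 0 := hGl0 _ (by
          rw [hGl]; exact List.mem_map_of_mem (Finset.mem_toList.mpr hv'S))
        rw [← he, dotProduct_smul, smul_eq_mul] at h0
        have hNne : ((Nf v' : ℚ)) ≠ 0 := Nat.cast_ne_zero.mpr hNpos.ne'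
        rcases mul_eq_zero.mp h0 with h | h
        · exact absurd h hNne
        · simpa [LinearMap.mem_ker] using h
      intro v hv
      simpa using LinearMap.mem_ker.mp (hker hv)
    have hyBG : ∀ g ∈ BG, y ⬝ᵥ qcast g = 0 := fun g hg =>
      hyU _ (Submodule.subset_span ⟨g, hg, rfl⟩)
    obtain ⟨M, z, hM, hz⟩ := exists_int_scale y
    have hM' : (M : ℚ) ≠ 0 := Nat.cast_ne_zero.mpr hM.ne'
    have hzF : ∀ b ∈ F, 0 ≤ (∑ i, z i * b i : ℤ) := by
      intro b hb
      have h1 : 0 ≤ y ⬝ᵥ qcast b := hy _ (by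
        rw [hL, hFl]
        exact List.mem_append_left _ (List.mem_map_of_mem (Finset.mem_toList.mpr hb)))
      have h2 : (0 : ℚ) ≤ ((∑ i, z i * b i : ℤ) : ℚ) := by
        rw [cast_dot_eq hz]
        exact mul_nonneg (Nat.cast_nonneg M) h1
      exact_mod_cast h2
    have h2 : ∀ x ∈ σG, dotR z x = 0 := by
      intro x hx
      rw [hσG] at hx
      have hker : Submodule.span ℝ ((fun b : Fin n → ℤ => fun i => ((b i : ℝ))) '' BG)
          ≤ LinearMap.ker (dotR z) := by
        rw [Submodule.span_le]
        rintro _ ⟨g, hg, rfl⟩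
        have h4 := hyBG g hg
        have h5 : ((∑ i, z i * g i : ℤ) : ℚ) = 0 := by rw [cast_dot_eq hz, h4, mul_zero]
        have h3 : (∑ i, z i * g i : ℤ) = 0 := by exact_mod_cast h5
        have : dotR z (fun i => ((g i : ℝ))) = 0 := by rw [dotR_rcast, h3]; simp
        simpa [LinearMap.mem_ker] using this
      exact LinearMap.mem_ker.mp (hker hx.2)
    have hall := key z hzF h2
    intro a ha
    rw [hL] at ha
    rcases List.mem_append.mp ha with hFa | hGa
    · rw [hFl] at hFa
      obtain ⟨b, hb, rfl⟩ := List.mem_map.mp hFa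
      have h5 : ((∑ i, z i * b i : ℤ) : ℚ) = (M : ℚ) * (y ⬝ᵥ qcast b) := cast_dot_eq hz b
      rw [hall b] at h5
      have h6 : (M : ℚ) * (y ⬝ᵥ qcast b) = 0 := by exact_mod_cast h5.symm
      rcases mul_eq_zero.mp h6 with h | h
      · exact absurd h hM'
      · exact le_of_eq h
    · rcases List.mem_append.mp hGa with h | h
      · exact le_of_eq (hGl0 _ h)
      · obtain ⟨w, hw, rfl⟩ := List.mem_map.mp h
        rw [dotProduct_neg, hGl0 _ hw, neg_zero]
  -- Step E: apply Stiemke and split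
  have hnnp : NNP (Fl ++ (Gl ++ Gl.map Neg.neg)) (0 : Fin n → ℚ) := by
    have := stiemke L hyp
    rwa [hL] at this
  obtain ⟨u, v, hu, hv, huv⟩ := nnp_append hnnp
  have hvU : v ∈ U := by
    have h1 := nnp_mem_span hv
    have h2 : {a : Fin n → ℚ | a ∈ Gl ++ Gl.map Neg.neg} ⊆ (U : Set (Fin n → ℚ)) := by
      intro a ha
      have haU : ∀ w ∈ Gl, w ∈ U := by
        intro w hw
        rw [hGl] at hw
        obtain ⟨v', hv', rfl⟩ := List.mem_map.mp hw
        have hv'U : v' ∈ U := hSU v' (Finset.mem_toList.mp hv')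
        obtain ⟨_, _, he⟩ := hgf v' hv'U
        rw [← he]
        exact U.smul_mem _ hv'U
      rcases List.mem_append.mp ha with h | h
      · exact haU a h
      · obtain ⟨w, hw, rfl⟩ := List.mem_map.mp h
        exact U.neg_mem (haU w hw)
    exact (Submodule.span_le.mpr h2) h1
  have huU : u ∈ U := by
    have h1 : u = -v := eq_neg_of_add_eq_zero_left huv.symm
    rw [h1]
    exact U.neg_mem hvU
  have hFlnd : Fl.Nodup := by
    rw [hFl]
    exact (Finset.nodup_toList F).map qcast_injective
  obtain ⟨c, hcpos, hcsum⟩ := nnp_finset hFlnd hu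
  have hFlfin : Fl.toFinset = F.image qcast := by
    ext a
    simp [hFl, List.mem_toFinset, List.mem_map, Finset.mem_image, Finset.mem_toList]
  have husum : u = ∑ b ∈ F, c (qcast b) • qcast b := by
    rw [hcsum, hFlfin, Finset.sum_image (fun a _ b _ h => qcast_injective h)]
  obtain ⟨N, g, hN, hgBG, hNu⟩ := clear_denom BG u huU
  refine ⟨g, hgBG, ?_⟩
  have hgl : qcast g = ∑ b ∈ F, ((N : ℚ) * c (qcast b)) • qcast b := by
    rw [← hNu, husum, Finset.smul_sum]
    refine Finset.sum_congr rfl fun b _ => ?_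
    rw [smul_smul]
  have hgr : (fun i => ((g i : ℝ)))
      = ∑ b ∈ F, (((N : ℚ) * c (qcast b) : ℚ) : ℝ) • (fun i => ((b i : ℝ))) := by
    funext i
    have h1 := congrFun hgl i
    simp only [Finset.sum_apply, Pi.smul_apply, smul_eq_mul, qcast] at h1 ⊢
    rw [show ((g i : ℝ)) = (((g i : ℚ)) : ℝ) by push_cast; rfl, h1]
    push_cast
    rfl
  set c₀ : {b : Fin n → ℤ // b ∈ F} → ℝ :=
    fun b => (((N : ℚ) * c (qcast b.1) : ℚ) : ℝ) with hc₀
  have hc₀pos : ∀ b, 0 < c₀ b := by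
    intro b
    have hcF : qcast b.1 ∈ Fl := by
      rw [hFl]
      exact List.mem_map_of_mem (Finset.mem_toList.mpr b.2)
    have h9 : (0 : ℚ) < (N : ℚ) * c (qcast b.1) :=
      mul_pos (by exact_mod_cast hN) (hcpos _ hcF)
    show (0 : ℝ) < (((N : ℚ) * c (qcast b.1) : ℚ) : ℝ)
    exact_mod_cast h9
  have hTc₀ : T c₀ = (fun i => ((g i : ℝ))) := by
    rw [hgr, hTapp, Finset.univ_eq_attach,
      Finset.sum_attach F (fun b => (((N : ℚ) * c (qcast b) : ℚ) : ℝ) • (fun i => ((b i : ℝ))))]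
  exact interior_maximal hPsub (hTopen P hPopen) ⟨c₀, hc₀pos, hTc₀⟩
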